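/- Suppose z : [s,∞) → ℝ≥0 is absolutely continuous and satisfies z'(t) ≤ c(t)z(t) + f(t) for a.e. t ≥ s, where c, f ∈ L¹_loc. If there exist t̃c > 0 and s₀ ≤ 0 such that ∫_s^0 c(τ)dτ ≤ (t̃c/2)s for all s ≤ s₀ (i.e., the average of c over [s,0] is at most −t̃c/2), then z(0) ≤ z(s)e^{(t̃c/2)s} + ∫_s^{s₀} e^{(t̃c/2)r} f(r)dr + ∫_{s₀}^0 e^{∫_r^0 c(τ)dτ} f(r)dr for all s ≤ s₀. -/

import Mathlib

open MeasureTheory intervalIntegral Set Filter Topology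

set_option maxHeartbeats 1000000 in
lemma gronwall_cont (z g f : ℝ → ℝ) (a b : ℝ) (hab : a ≤ b)
    (hg : Continuous g)
    (hfint : IntegrableOn f (Set.Icc a b))
    (hzdiff : Differentiable ℝ z)
    (hineq : ∀ᵐ t ∂(volume.restrict (Set.Icc a b)), deriv z t ≤ g t * z t + f t) :
    z b ≤ z a * Real.exp (∫ τ in a..b, g τ) +
      ∫ r in a..b, Real.exp (∫ τ in r..b, g τ) * f r := by
  set E : ℝ → ℝ := fun t => Real.exp (-∫ τ in a..t, g τ) with hE_def
  have hEpos : ∀ t, 0 < E t := fun t => Real.exp_pos _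
  have hE : ∀ t, HasDerivAt E (-g t * E t) t := by
    intro t
    have h1 : HasDerivAt (fun u => ∫ τ in a..u, g τ) (g t) t :=
      integral_hasDerivAt_right (hg.intervalIntegrable a t)
        (hg.stronglyMeasurableAtFilter volume _) hg.continuousAt
    have := (h1.neg).exp
    simpa [hE_def, mul_comm] using this
  have hEcont : Continuous E := by
    rw [continuous_iff_continuousAt]; exact fun t => (hE t).continuousAt
  set y : ℝ → ℝ := fun t => z t * E t with hy_def
  have hy : ∀ t, HasDerivAt y (deriv z t * E t + z t * (-g t * E t)) t := fun t =>
    ((hzdiff t).hasDerivAt).mul (hE t)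
  have hderivy : ∀ t, deriv y t = deriv z t * E t + z t * (-g t * E t) := fun t => (hy t).deriv
  set φ : ℝ → ℝ := fun x => max (deriv y x) (E x * f x) with hφ_def
  have hφae : φ =ᵐ[volume.restrict (Set.Icc a b)] fun x => E x * f x := by
    filter_upwards [hineq] with x hx
    have : deriv y x ≤ E x * f x := by
      rw [hderivy x]
      have h2 : deriv z x - g x * z x ≤ f x := by linarith
      calc deriv z x * E x + z x * (-g x * E x) = (deriv z x - g x * z x) * E x := by ring
        _ ≤ f x * E x := mul_le_mul_of_nonneg_right h2 (hEpos x).le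
        _ = E x * f x := mul_comm _ _
    simp only [hφ_def, max_eq_right this]
  have hEfint : IntegrableOn (fun x => E x * f x) (Set.Icc a b) :=
    IntegrableOn.continuousOn_mul hEcont.continuousOn hfint isCompact_Icc
  have hφint : IntegrableOn φ (Set.Icc a b) := hEfint.congr hφae.symm
  have key : y b - y a ≤ ∫ r in a..b, φ r :=
    sub_le_integral_of_hasDeriv_right_of_le hab
      (fun t _ => ((hy t).continuousAt.continuousWithinAt))
      (fun x _ => ((hy x).congr_deriv (hderivy x).symm).hasDerivWithinAt)
      hφint (fun x _ => le_max_left _ _)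
  have hint_eq : ∫ r in a..b, φ r = ∫ r in a..b, E r * f r := by
    rw [intervalIntegral.integral_of_le hab, intervalIntegral.integral_of_le hab]
    exact integral_congr_ae (ae_restrict_of_ae_restrict_of_subset Ioc_subset_Icc_self hφae)
  set I : ℝ := ∫ τ in a..b, g τ with hI_def
  have hEb : E b * Real.exp I = 1 := by
    rw [hE_def]; simp [← Real.exp_add, hI_def]
  have hEa : E a = 1 := by rw [hE_def]; simp
  have h3 : z b * E b ≤ z a + ∫ r in a..b, E r * f r := by
    have := key
    rw [hint_eq] at this
    rw [hy_def] at this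
    simp only at this
    rw [hEa, mul_one] at this
    linarith
  have h5 : z b = (z b * E b) * Real.exp I := by
    rw [mul_assoc, hEb, mul_one]
  have h6 : ∀ r : ℝ, Real.exp (∫ τ in r..b, g τ) = Real.exp I * E r := by
    intro r
    have hadj : (∫ τ in a..r, g τ) + (∫ τ in r..b, g τ) = I :=
      integral_add_adjacent_intervals (hg.intervalIntegrable a r) (hg.intervalIntegrable r b)
    rw [hE_def]
    simp only [← Real.exp_add]
    congr 1
    linarith
  have h7 : (∫ r in a..b, E r * f r) * Real.exp I
      = ∫ r in a..b, Real.exp (∫ τ in r..b, g τ) * f r := by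
    rw [← intervalIntegral.integral_mul_const]
    apply intervalIntegral.integral_congr
    intro r _
    show E r * f r * Real.exp I = Real.exp (∫ τ in r..b, g τ) * f r
    rw [h6 r]; ring
  calc z b = (z b * E b) * Real.exp I := h5
    _ ≤ (z a + ∫ r in a..b, E r * f r) * Real.exp I := by
        apply mul_le_mul_of_nonneg_right h3 (Real.exp_pos _).le
    _ = z a * Real.exp I + (∫ r in a..b, E r * f r) * Real.exp I := by ring
    _ = z a * Real.exp I + ∫ r in a..b, Real.exp (∫ τ in r..b, g τ) * f r := by rw [h7]



section helpers
variable {a b : ℝ}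

lemma mkII {F : ℝ → ℝ} (hab : a ≤ b) (h : IntegrableOn F (Set.Icc a b)) :
    IntervalIntegrable F volume a b := by
  rw [intervalIntegrable_iff_integrableOn_Ioc_of_le hab]
  exact h.mono_set Ioc_subset_Icc_self

end helpers

set_option maxHeartbeats 2000000 in
lemma gronwall_loc (z c f : ℝ → ℝ) (a b : ℝ) (hab : a ≤ b)
    (hznn : ∀ t, 0 ≤ z t) (hfnn : ∀ t, 0 ≤ f t)
    (hcloc : LocallyIntegrable c) (hfloc : LocallyIntegrable f)
    (hzdiff : Differentiable ℝ z)
    (hineq : ∀ᵐ t ∂volume, deriv z t ≤ c t * z t + f t) :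
    z b ≤ z a * Real.exp (∫ τ in a..b, c τ) +
      ∫ r in a..b, Real.exp (∫ τ in r..b, c τ) * f r := by
  have hcint : IntegrableOn c (Set.Icc a b) := hcloc.integrableOn_isCompact isCompact_Icc
  have hfint : IntegrableOn f (Set.Icc a b) := hfloc.integrableOn_isCompact isCompact_Icc
  -- max of z on Icc
  obtain ⟨x₀, hx₀mem, hx₀⟩ := isCompact_Icc.exists_isMaxOn (nonempty_Icc.2 hab)
    hzdiff.continuous.continuousOn
  set M : ℝ := z x₀ with hM_def
  have hM : ∀ t ∈ Set.Icc a b, z t ≤ M := fun t ht => hx₀ ht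
  have hM0 : 0 ≤ M := hznn x₀
  set K₀ : ℝ := ∫ x in Set.Ioc a b, |c x| with hK₀_def
  -- continuity of r ↦ ∫_r^b c on Icc a b
  have hIc_cont : ContinuousOn (fun r => ∫ τ in r..b, c τ) (Set.Icc a b) := by
    have := continuousOn_primitive_interval_left (f := c) (μ := volume) (a := a) (b := b)
      (by rwa [uIcc_of_le hab])
    rwa [uIcc_of_le hab] at this
  have hIcf_int : IntegrableOn (fun r => Real.exp (∫ τ in r..b, c τ) * f r) (Set.Icc a b) :=
    IntegrableOn.continuousOn_mul (Real.continuous_exp.comp_continuousOn hIc_cont) hfint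
      isCompact_Icc
  set T : ℝ := z a * Real.exp (∫ τ in a..b, c τ) +
      ∫ r in a..b, Real.exp (∫ τ in r..b, c τ) * f r with hT_def
  show z b ≤ T
  refine le_of_forall_pos_le_add fun ε εpos => ?_
  -- choose δ
  set F : ℝ → ℝ := fun δ => Real.exp δ * T + M * Real.exp δ * Real.exp K₀ * δ with hF_def
  have hFcont : ContinuousAt F 0 := by fun_prop
  have hF0 : F 0 = T := by simp [hF_def]
  obtain ⟨δ, hFδ, δpos⟩ : ∃ δ, F δ ≤ T + ε ∧ 0 < δ := by
    have h1 : ∀ᶠ x in 𝓝 (0:ℝ), F x < T + ε := by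
      apply (hFcont.tendsto).eventually_lt_const
      rw [hF0]; linarith
    have h2 : ∀ᶠ x in 𝓝[>] (0:ℝ), F x < T + ε := h1.filter_mono nhdsWithin_le_nhds
    obtain ⟨x, hx1, hx2⟩ := (h2.and self_mem_nhdsWithin).exists
    exact ⟨x, hx1.le, hx2⟩
  -- continuous approximation of c
  obtain ⟨g, -, hgδ, hgcont, hgint⟩ :=
    ((hcint.integrable_indicator measurableSet_Icc)).exists_hasCompactSupport_integral_sub_le
      (μ := volume) δpos
  set D : ℝ → ℝ := fun x => |Set.indicator (Set.Icc a b) c x - g x| with hD_def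
  have hDint : Integrable D :=
    ((hcint.integrable_indicator measurableSet_Icc).sub hgint).abs
  have hDnn : ∀ x, 0 ≤ D x := fun x => abs_nonneg _
  have hDδ : ∫ x, D x ≤ δ := by
    simpa [hD_def, Real.norm_eq_abs] using hgδ
  have hDIcc : ∀ x ∈ Set.Icc a b, D x = |c x - g x| := by
    intro x hx; simp [hD_def, Set.indicator_of_mem hx]
  have hineq' : ∀ᵐ t ∂(volume.restrict (Set.Icc a b)),
      deriv z t ≤ g t * z t + (f t + M * D t) := by
    filter_upwards [ae_restrict_of_ae hineq, ae_restrict_mem measurableSet_Icc] with t ht htmem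
    have e1 : D t = |c t - g t| := hDIcc t htmem
    have e2 : (c t - g t) * z t ≤ D t * M := by
      calc (c t - g t) * z t ≤ |c t - g t| * z t :=
            mul_le_mul_of_nonneg_right (le_abs_self _) (hznn t)
        _ ≤ |c t - g t| * M := mul_le_mul_of_nonneg_left (hM t htmem) (abs_nonneg _)
        _ = D t * M := by rw [e1]
    have e3 : c t * z t = g t * z t + (c t - g t) * z t := by ring
    linarith
  have hkey := gronwall_cont z g (fun t => f t + M * D t) a b hab hgcont
    (hfint.add ((hDint.const_mul M).integrableOn)) hzdiff hineq'
  have hcII : ∀ r ∈ Set.Icc a b, IntervalIntegrable c volume r b := by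
    intro r hr
    rw [intervalIntegrable_iff_integrableOn_Ioc_of_le hr.2]
    exact hcint.mono_set (fun x hx => ⟨hr.1.trans hx.1.le, hx.2⟩)
  have hA : ∀ r ∈ Set.Icc a b, (∫ τ in r..b, g τ) ≤ (∫ τ in r..b, c τ) + δ := by
    intro r hr
    have h1 : (∫ τ in r..b, g τ) - (∫ τ in r..b, c τ) = ∫ τ in r..b, (g τ - c τ) :=
      (integral_sub (hgcont.intervalIntegrable r b) (hcII r hr)).symm
    have h3 : (∫ τ in r..b, (g τ - c τ)) ≤ |∫ τ in r..b, (g τ - c τ)| := le_abs_self _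
    have h4 : |∫ τ in r..b, (g τ - c τ)| ≤ ∫ τ in r..b, |g τ - c τ| :=
      intervalIntegral.abs_integral_le_integral_abs hr.2
    have h5 : (∫ τ in r..b, |g τ - c τ|) = ∫ τ in Set.Ioc r b, D τ := by
      rw [intervalIntegral.integral_of_le hr.2]
      apply setIntegral_congr_fun measurableSet_Ioc
      intro x hx
      rw [hDIcc x ⟨hr.1.trans hx.1.le, hx.2⟩, abs_sub_comm]
    have h6 : (∫ τ in Set.Ioc r b, D τ) ≤ ∫ τ, D τ :=
      setIntegral_le_integral hDint (ae_of_all _ hDnn)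
    linarith
  have hB : ∀ r ∈ Set.Icc a b, (∫ τ in r..b, c τ) ≤ K₀ := by
    intro r hr
    have h3 := le_abs_self (∫ τ in r..b, c τ)
    have h4 := intervalIntegral.abs_integral_le_integral_abs (f := c) (μ := volume) hr.2
    have h5 : (∫ τ in r..b, |c τ|) = ∫ τ in Set.Ioc r b, |c τ| := integral_of_le hr.2
    have habs : IntegrableOn (fun x => |c x|) (Set.Ioc a b) := by
      apply IntegrableOn.mono_set _ (Ioc_subset_Icc_self (a := a) (b := b))
      exact hcint.abs
    have h6 : (∫ τ in Set.Ioc r b, |c τ|) ≤ ∫ τ in Set.Ioc a b, |c τ| :=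
      setIntegral_mono_set habs (ae_of_all _ fun x => abs_nonneg _)
        (HasSubset.Subset.eventuallyLE (Ioc_subset_Ioc_left hr.1))
    rw [hK₀_def]
    linarith
  have hIg_cont : Continuous (fun r => ∫ τ in r..b, g τ) := by
    have h := (intervalIntegral.continuous_primitive (μ := volume) (fun x y => hgcont.intervalIntegrable x y) b).neg
    convert h using 1
    funext r
    rw [intervalIntegral.integral_symm]
    rfl
  have hEg_cont : ContinuousOn (fun r => Real.exp (∫ τ in r..b, g τ)) (Set.Icc a b) :=
    (Real.continuous_exp.comp hIg_cont).continuousOn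
  have i1 : IntegrableOn (fun r => Real.exp (∫ τ in r..b, g τ) * f r) (Set.Icc a b) :=
    IntegrableOn.continuousOn_mul hEg_cont hfint isCompact_Icc
  have i2 : IntegrableOn (fun r => Real.exp (∫ τ in r..b, g τ) * (M * D r)) (Set.Icc a b) :=
    IntegrableOn.continuousOn_mul hEg_cont ((hDint.const_mul M).integrableOn) isCompact_Icc
  have hsplit : (∫ r in a..b, Real.exp (∫ τ in r..b, g τ) * (f r + M * D r))
      = (∫ r in a..b, Real.exp (∫ τ in r..b, g τ) * f r)
        + ∫ r in a..b, Real.exp (∫ τ in r..b, g τ) * (M * D r) := by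
    rw [← intervalIntegral.integral_add (mkII hab i1) (mkII hab i2)]
    apply intervalIntegral.integral_congr
    intro x _
    show Real.exp (∫ τ in x..b, g τ) * (f x + M * D x) = _
    ring
  have hT1 : z a * Real.exp (∫ τ in a..b, g τ)
      ≤ Real.exp δ * (z a * Real.exp (∫ τ in a..b, c τ)) := by
    have h := hA a ⟨le_refl a, hab⟩
    calc z a * Real.exp (∫ τ in a..b, g τ)
        ≤ z a * Real.exp ((∫ τ in a..b, c τ) + δ) :=
          mul_le_mul_of_nonneg_left (Real.exp_le_exp.2 h) (hznn a)
      _ = Real.exp δ * (z a * Real.exp (∫ τ in a..b, c τ)) := by rw [Real.exp_add]; ring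
  have hT2 : (∫ r in a..b, Real.exp (∫ τ in r..b, g τ) * f r)
      ≤ Real.exp δ * ∫ r in a..b, Real.exp (∫ τ in r..b, c τ) * f r := by
    rw [← intervalIntegral.integral_const_mul]
    apply intervalIntegral.integral_mono_on hab (mkII hab i1)
      (mkII hab (hIcf_int.const_mul _))
    intro x hx
    calc Real.exp (∫ τ in x..b, g τ) * f x
        ≤ Real.exp ((∫ τ in x..b, c τ) + δ) * f x :=
          mul_le_mul_of_nonneg_right (Real.exp_le_exp.2 (hA x hx)) (hfnn x)
      _ = Real.exp δ * (Real.exp (∫ τ in x..b, c τ) * f x) := by rw [Real.exp_add]; ring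
  have hDab : (∫ r in a..b, D r) ≤ δ := by
    rw [intervalIntegral.integral_of_le hab]
    exact le_trans (setIntegral_le_integral hDint (ae_of_all _ hDnn)) hDδ
  have hT3 : (∫ r in a..b, Real.exp (∫ τ in r..b, g τ) * (M * D r))
      ≤ M * Real.exp δ * Real.exp K₀ * δ := by
    have hb1 : (∫ r in a..b, Real.exp (∫ τ in r..b, g τ) * (M * D r))
        ≤ ∫ r in a..b, (Real.exp δ * Real.exp K₀ * M) * D r := by
      apply intervalIntegral.integral_mono_on hab (mkII hab i2)
        (mkII hab ((hDint.const_mul _).integrableOn))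
      intro x hx
      have h1 : (∫ τ in x..b, g τ) ≤ K₀ + δ := by linarith [hA x hx, hB x hx]
      calc Real.exp (∫ τ in x..b, g τ) * (M * D x)
          ≤ Real.exp (K₀ + δ) * (M * D x) := by
            apply mul_le_mul_of_nonneg_right (Real.exp_le_exp.2 h1) (by positivity)
        _ = (Real.exp δ * Real.exp K₀ * M) * D x := by rw [Real.exp_add]; ring
    rw [intervalIntegral.integral_const_mul] at hb1
    calc (∫ r in a..b, Real.exp (∫ τ in r..b, g τ) * (M * D r))
        ≤ (Real.exp δ * Real.exp K₀ * M) * (∫ r in a..b, D r) := hb1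
      _ ≤ (Real.exp δ * Real.exp K₀ * M) * δ :=
          mul_le_mul_of_nonneg_left hDab (by positivity)
      _ = M * Real.exp δ * Real.exp K₀ * δ := by ring
  calc z b ≤ z a * Real.exp (∫ τ in a..b, g τ)
        + ∫ r in a..b, Real.exp (∫ τ in r..b, g τ) * (f r + M * D r) := hkey
    _ = z a * Real.exp (∫ τ in a..b, g τ)
        + (∫ r in a..b, Real.exp (∫ τ in r..b, g τ) * f r)
        + ∫ r in a..b, Real.exp (∫ τ in r..b, g τ) * (M * D r) := by rw [hsplit]; ring
    _ ≤ Real.exp δ * (z a * Real.exp (∫ τ in a..b, c τ))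
        + Real.exp δ * (∫ r in a..b, Real.exp (∫ τ in r..b, c τ) * f r)
        + M * Real.exp δ * Real.exp K₀ * δ := by linarith
    _ = F δ := by rw [hF_def, hT_def]; ring
    _ ≤ T + ε := hFδ

/-- Gronwall-type absorption estimate. -/
theorem stmt17 (z c f : ℝ → ℝ) (tc s₀ : ℝ)
    (htc : 0 < tc) (hs₀ : s₀ ≤ 0)
    (hznn : ∀ t, 0 ≤ z t) (hfnn : ∀ t, 0 ≤ f t)
    (hcloc : LocallyIntegrable c) (hfloc : LocallyIntegrable f)
    (hzdiff : Differentiable ℝ z)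
    (hineq : ∀ᵐ t ∂volume, deriv z t ≤ c t * z t + f t)
    (hc : ∀ s ≤ s₀, (∫ τ in s..(0:ℝ), c τ) ≤ (tc / 2) * s) :
    ∀ s ≤ s₀,
      z 0 ≤ z s * Real.exp ((tc / 2) * s) +
        (∫ r in s..s₀, Real.exp ((tc / 2) * r) * f r) +
        ∫ r in s₀..(0:ℝ), Real.exp (∫ τ in r..(0:ℝ), c τ) * f r := by
  intro s hs
  have hs0 : s ≤ 0 := hs.trans hs₀
  have key := gronwall_loc z c f s 0 hs0 hznn hfnn hcloc hfloc hzdiff hineq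
  have hIc_cont : ContinuousOn (fun r => ∫ τ in r..(0:ℝ), c τ) (Set.Icc s 0) := by
    have := continuousOn_primitive_interval_left (f := c) (μ := volume) (a := s) (b := (0:ℝ))
      (by rw [uIcc_of_le hs0]; exact hcloc.integrableOn_isCompact isCompact_Icc)
    rwa [uIcc_of_le hs0] at this
  have hfint : IntegrableOn f (Set.Icc s 0) := hfloc.integrableOn_isCompact isCompact_Icc
  have i1 : IntegrableOn (fun r => Real.exp (∫ τ in r..(0:ℝ), c τ) * f r) (Set.Icc s 0) :=
    IntegrableOn.continuousOn_mul (Real.continuous_exp.comp_continuousOn hIc_cont) hfint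
      isCompact_Icc
  have ii1 : IntervalIntegrable (fun r => Real.exp (∫ τ in r..(0:ℝ), c τ) * f r) volume s s₀ := by
    rw [intervalIntegrable_iff_integrableOn_Ioc_of_le hs]
    exact i1.mono_set (fun x hx => ⟨hx.1.le, hx.2.trans hs₀⟩)
  have ii2 : IntervalIntegrable (fun r => Real.exp (∫ τ in r..(0:ℝ), c τ) * f r) volume s₀ 0 := by
    rw [intervalIntegrable_iff_integrableOn_Ioc_of_le hs₀]
    exact i1.mono_set (fun x hx => ⟨hs.trans hx.1.le, hx.2⟩)
  have hsplit := intervalIntegral.integral_add_adjacent_intervals ii1 ii2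
  have iiRHS : IntervalIntegrable (fun r => Real.exp ((tc / 2) * r) * f r) volume s s₀ := by
    rw [intervalIntegrable_iff_integrableOn_Ioc_of_le hs]
    exact (IntegrableOn.continuousOn_mul
      ((Real.continuous_exp.comp (continuous_const.mul continuous_id)).continuousOn)
      (hfloc.integrableOn_isCompact isCompact_Icc) isCompact_Icc).mono_set Ioc_subset_Icc_self
  have hmid : (∫ r in s..s₀, Real.exp (∫ τ in r..(0:ℝ), c τ) * f r)
      ≤ ∫ r in s..s₀, Real.exp ((tc / 2) * r) * f r := by
    apply intervalIntegral.integral_mono_on hs ii1 iiRHS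
    intro x hx
    exact mul_le_mul_of_nonneg_right (Real.exp_le_exp.2 (hc x hx.2)) (hfnn x)
  have h1 : z s * Real.exp (∫ τ in s..(0:ℝ), c τ) ≤ z s * Real.exp ((tc / 2) * s) :=
    mul_le_mul_of_nonneg_left (Real.exp_le_exp.2 (hc s hs)) (hznn s)
  rw [← hsplit] at key
  linarith
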